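/- Under the list-experiment model with misreporting (Assumptions 1 and 2), the mean difference of observed responses across the two groups satisfies E(Y₁) − E(Y₀) = δ·(1−p₁) + ((p₀−p₁)/(1−p₀))·E(Y₀) − J·(1−p₁)·p₀/(2·(1−p₀)) + (J+1)·p₁/2, where E(Y₀) = ∑_{j=0}^{J} j·P₀(j) and E(Y₁) = ∑_{j=0}^{J+1} j·P₁(j). (Corollary 1, general case.) -/

import Mathlib

lemma Icc_int_insert_top (a b : ℤ) (h : a ≤ b + 1) :
    Finset.Icc a (b + 1) = insert (b + 1) (Finset.Icc a b) := by
  ext x; simp only [Finset.mem_Icc, Finset.mem_insert]; omega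

lemma sum_Icc_int_succ_top {M : Type*} [AddCommMonoid M] (a b : ℤ) (h : a ≤ b + 1)
    (f : ℤ → M) :
    ∑ j ∈ Finset.Icc a (b + 1), f j = (∑ j ∈ Finset.Icc a b, f j) + f (b + 1) := by
  rw [Icc_int_insert_top a b h, Finset.sum_insert (by simp)]
  exact add_comm _ _

lemma sum_id_Icc_real (n : ℕ) :
    ∑ j ∈ Finset.Icc (0 : ℤ) (n : ℤ), (j : ℝ) = (n : ℝ) * ((n : ℝ) + 1) / 2 := by
  induction n with
  | zero => simp
  | succ k ih =>
      rw [show ((k + 1 : ℕ) : ℤ) = (k : ℤ) + 1 by push_cast; ring,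
        sum_Icc_int_succ_top 0 (k : ℤ) (by positivity) _, ih]
      push_cast; ring

theorem list_experiment_mean_difference_general
    (J : ℕ) (hJ : 1 ≤ J)
    (P : ℤ → ℝ)
    (hPzero : ∀ j : ℤ, j < 0 ∨ (J : ℤ) < j → P j = 0)
    (hPnonneg : ∀ j : ℤ, 0 ≤ P j)
    (hPsum : ∑ j ∈ Finset.Icc (0 : ℤ) (J : ℤ), P j = 1)
    (δ p₀ p₁ : ℝ)
    (hδ : 0 ≤ δ ∧ δ ≤ 1) (hp₀ : 0 ≤ p₀ ∧ p₀ < 1) (hp₁ : 0 ≤ p₁ ∧ p₁ < 1)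
    (P₀ P₁ : ℤ → ℝ)
    (hP₀ : ∀ j : ℤ, 0 ≤ j → j ≤ (J : ℤ) →
      P₀ j = (1 - p₀) * P j + p₀ / ((J : ℝ) + 1))
    (hP₁ : ∀ j : ℤ, 0 ≤ j → j ≤ (J : ℤ) + 1 →
      P₁ j = (1 - p₁) * (δ * P (j - 1) + (1 - δ) * P j) + p₁ / ((J : ℝ) + 2)) :
    (∑ j ∈ Finset.Icc (0 : ℤ) ((J : ℤ) + 1), (j : ℝ) * P₁ j) -
        (∑ j ∈ Finset.Icc (0 : ℤ) (J : ℤ), (j : ℝ) * P₀ j) =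
      δ * (1 - p₁) +
        (p₀ - p₁) / (1 - p₀) * (∑ j ∈ Finset.Icc (0 : ℤ) (J : ℤ), (j : ℝ) * P₀ j) -
        (J : ℝ) * (1 - p₁) * p₀ / (2 * (1 - p₀)) + ((J : ℝ) + 1) * p₁ / 2 := by
  set M : ℝ := ∑ j ∈ Finset.Icc (0 : ℤ) (J : ℤ), (j : ℝ) * P j with hM
  have hJ1 : ((J : ℝ) + 1) ≠ 0 := by positivity
  have hJ2 : ((J : ℝ) + 2) ≠ 0 := by positivity
  have h1p₀ : (1 : ℝ) - p₀ ≠ 0 := by linarith [hp₀.2]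
  -- E(Y₀)
  have hE0 : ∑ j ∈ Finset.Icc (0 : ℤ) (J : ℤ), (j : ℝ) * P₀ j
      = (1 - p₀) * M + p₀ * (J : ℝ) / 2 := by
    have h1 : ∑ j ∈ Finset.Icc (0 : ℤ) (J : ℤ), (j : ℝ) * P₀ j
        = ∑ j ∈ Finset.Icc (0 : ℤ) (J : ℤ),
            ((1 - p₀) * ((j : ℝ) * P j) + (p₀ / ((J : ℝ) + 1)) * (j : ℝ)) := by
      apply Finset.sum_congr rfl
      intro j hj
      rw [Finset.mem_Icc] at hj
      rw [hP₀ j hj.1 hj.2]; ring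
    rw [h1, Finset.sum_add_distrib, ← Finset.mul_sum, ← Finset.mul_sum, ← hM,
      sum_id_Icc_real]
    field_simp
  -- shifted sum
  have hshift : ∑ j ∈ Finset.Icc (0 : ℤ) ((J : ℤ) + 1), (j : ℝ) * P (j - 1)
      = M + 1 := by
    have hmap : (Finset.Icc ((-1) : ℤ) (J : ℤ)).map (addRightEmbedding 1)
        = Finset.Icc (0 : ℤ) ((J : ℤ) + 1) := by
      rw [Finset.map_add_right_Icc]; norm_num
    rw [← hmap, Finset.sum_map]
    simp only [addRightEmbedding_apply, add_sub_cancel_right]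
    have hins : Finset.Icc ((-1) : ℤ) (J : ℤ)
        = insert (-1 : ℤ) (Finset.Icc (0 : ℤ) (J : ℤ)) := by
      ext x; simp only [Finset.mem_Icc, Finset.mem_insert]; omega
    rw [hins, Finset.sum_insert (by simp)]
    have h2 : ∑ j ∈ Finset.Icc (0 : ℤ) (J : ℤ), ((j + 1 : ℤ) : ℝ) * P j
        = ∑ j ∈ Finset.Icc (0 : ℤ) (J : ℤ), ((j : ℝ) * P j + P j) := by
      apply Finset.sum_congr rfl; intro j _; push_cast; ring
    rw [h2, Finset.sum_add_distrib, ← hM, hPsum]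
    norm_num
  -- sum over extended range of j * P j equals M
  have hext : ∑ j ∈ Finset.Icc (0 : ℤ) ((J : ℤ) + 1), (j : ℝ) * P j = M := by
    rw [sum_Icc_int_succ_top 0 (J : ℤ) (by positivity) _,
      hPzero ((J : ℤ) + 1) (Or.inr (by omega)), ← hM]
    ring
  -- E(Y₁)
  have hE1 : ∑ j ∈ Finset.Icc (0 : ℤ) ((J : ℤ) + 1), (j : ℝ) * P₁ j
      = (1 - p₁) * (M + δ) + p₁ * ((J : ℝ) + 1) / 2 := by
    have h3 : ∑ j ∈ Finset.Icc (0 : ℤ) ((J : ℤ) + 1), (j : ℝ) * P₁ j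
        = ∑ j ∈ Finset.Icc (0 : ℤ) ((J : ℤ) + 1),
            ((1 - p₁) * δ * ((j : ℝ) * P (j - 1)) + (1 - p₁) * (1 - δ) * ((j : ℝ) * P j)
              + (p₁ / ((J : ℝ) + 2)) * (j : ℝ)) := by
      apply Finset.sum_congr rfl
      intro j hj
      rw [Finset.mem_Icc] at hj
      rw [hP₁ j hj.1 hj.2]; ring
    rw [h3, Finset.sum_add_distrib, Finset.sum_add_distrib, ← Finset.mul_sum,
      ← Finset.mul_sum, ← Finset.mul_sum, hshift, hext]
    have hcast : ((J : ℤ) + 1 : ℤ) = ((J + 1 : ℕ) : ℤ) := by push_cast; ring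
    rw [hcast, sum_id_Icc_real (J + 1)]
    push_cast
    field_simp
    ring
  rw [hE1, hE0]
  field_simp
  ring
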